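/- arXiv:1311.3518 — 2 statements merged into one kernel-verified Lean document; each statement's English description precedes it below -/
import Mathlib

section
/- Let Γ be a finitely generated group acting continuously on a connected T1 topological space X, and let C ⊆ Γ be a subgroup of finite index. If every Γ-orbit is dense in X, then every C-orbit is dense in X. -/
open Set Pointwise

lemma aux_interior_biUnion_empty {X : Type*} [TopologicalSpace X] {ι : Type*} (s : Finset ι)
    (f : ι → Set X) (hc : ∀ i, IsClosed (f i)) (hi : ∀ i, interior (f i) = ∅) :
    interior (⋃ i ∈ s, f i) = ∅ := by
  classical
  induction s using Finset.induction with
  | empty => simp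
  | insert _ _ hmem ih =>
      rw [Finset.set_biUnion_insert]
      rw [interior_union_isClosed_of_interior_empty (hc _) ih]
      exact hi _

lemma aux_frontier_smul {Γ X : Type*} [Group Γ] [TopologicalSpace X] [MulAction Γ X]
    [ContinuousConstSMul Γ X] (g : Γ) (s : Set X) : frontier (g • s) = g • frontier s := by
  rw [frontier, frontier, closure_smul, interior_smul, smul_set_sdiff]

/-- If a finitely generated group Γ acts continuously on a connected T1 space with all
orbits dense, and C ≤ Γ has finite index, then all C-orbits are dense. -/
theorem stmt1 {Γ X : Type*} [Group Γ] [Group.FG Γ] [TopologicalSpace X]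
    [ConnectedSpace X] [T1Space X] [MulAction Γ X] [ContinuousConstSMul Γ X]
    (C : Subgroup Γ) [C.FiniteIndex]
    (h : ∀ x : X, Dense (MulAction.orbit Γ x)) :
    ∀ x : X, Dense (MulAction.orbit C x) := by
  classical
  intro x
  set F : Set X := closure (MulAction.orbit C x) with hFdef
  -- C-invariance of F
  have hCinv : ∀ c : Γ, c ∈ C → c • F = F := by
    intro c hc
    have h1 : c • MulAction.orbit C x = MulAction.orbit C x :=
      MulAction.smul_orbit (⟨c, hc⟩ : C) x
    rw [hFdef, ← closure_smul, h1]
  haveI : Finite (Γ ⧸ C) := Subgroup.finite_quotient_of_finiteIndex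
  haveI : Fintype (Γ ⧸ C) := Fintype.ofFinite _
  -- the union of translates of the frontier of F
  set B : Set X := ⋃ q ∈ (Finset.univ : Finset (Γ ⧸ C)), (Quotient.out q) • frontier F
    with hBdef
  have hclosed : ∀ q : Γ ⧸ C, IsClosed ((Quotient.out q) • frontier F) := fun q =>
    isClosed_frontier.smul _
  have hBclosed : IsClosed B := by
    rw [hBdef]
    exact Set.Finite.isClosed_biUnion (Finset.finite_toSet _) (fun q _ => hclosed q)
  have hBint : interior B = ∅ := by
    rw [hBdef]
    refine aux_interior_biUnion_empty _ _ hclosed (fun q => ?_)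
    rw [← aux_frontier_smul]
    exact interior_frontier (isClosed_closure.smul _)
  -- translates of frontier F depend only on cosets
  have hcoset : ∀ g : Γ, g • frontier F = (Quotient.out (QuotientGroup.mk g : Γ ⧸ C)) • frontier F := by
    intro g
    set t := Quotient.out (QuotientGroup.mk g : Γ ⧸ C) with ht
    have htg : (QuotientGroup.mk t : Γ ⧸ C) = QuotientGroup.mk g := QuotientGroup.out_eq' _
    have hmem : t⁻¹ * g ∈ C := QuotientGroup.eq.mp htg
    have : (t⁻¹ * g) • frontier F = frontier F := by
      rw [← aux_frontier_smul, hCinv _ hmem]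
    calc g • frontier F = (t * (t⁻¹ * g)) • frontier F := by
          rw [mul_inv_cancel_left]
      _ = t • ((t⁻¹ * g) • frontier F) := by rw [mul_smul]
      _ = t • frontier F := by rw [this]
  -- B is Γ-invariant
  have hBinv : ∀ g : Γ, ∀ z ∈ B, g • z ∈ B := by
    intro g z hz
    rw [hBdef, Set.mem_iUnion₂] at hz
    obtain ⟨q, -, hq⟩ := hz
    have : g • z ∈ (g * Quotient.out q) • frontier F := by
      rw [mul_smul]
      exact Set.smul_mem_smul_set hq
    rw [hcoset (g * Quotient.out q)] at this
    rw [hBdef, Set.mem_iUnion₂]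
    exact ⟨_, Finset.mem_univ _, this⟩
  -- B must be empty
  have hBempty : B = ∅ := by
    by_contra hne
    obtain ⟨y, hy⟩ := Set.nonempty_iff_ne_empty.mpr hne
    have horb : MulAction.orbit Γ y ⊆ B := by
      rintro _ ⟨g, rfl⟩
      exact hBinv g y hy
    have : B = univ := by
      have := (h y).closure_eq
      have hsub : (univ : Set X) ⊆ B := by
        rw [← this]
        calc closure (MulAction.orbit Γ y) ⊆ closure B := closure_mono horb
          _ = B := hBclosed.closure_eq
      exact le_antisymm (subset_univ _) hsub
    rw [this, interior_univ] at hBint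
    exact (univ_nonempty (α := X)).ne_empty hBint
  -- frontier F is empty: use the coset of 1
  have hfront : frontier F = ∅ := by
    have h1 : (1 : Γ) • frontier F = frontier F := by simp
    have : frontier F ⊆ B := by
      intro z hz
      rw [hBdef, Set.mem_iUnion₂]
      have hz' : z ∈ Quotient.out (QuotientGroup.mk (1 : Γ) : Γ ⧸ C) • frontier F := by
        rw [← hcoset 1, h1]; exact hz
      exact ⟨_, Finset.mem_univ _, hz'⟩
    rw [hBempty] at this
    exact Set.subset_empty_iff.mp this
  -- F is clopen and nonempty, so F = univ
  have hclopen : IsClopen F := isClopen_iff_frontier_eq_empty.mpr hfront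
  have hne : F.Nonempty := ⟨x, subset_closure (MulAction.mem_orbit_self x)⟩
  have : F = univ := (isClopen_iff.mp hclopen).resolve_left (Set.nonempty_iff_ne_empty.mp hne)
  rw [dense_iff_closure_eq, ← hFdef, this]
end

section
/- Let Γ be a finitely generated group with two ends and C ⊆ Γ an infinite subgroup. Suppose Γ acts continuously on a connected T1 topological space X. Then the Γ-orbits are dense in X if and only if the C-orbits are dense in X. -/
/-- A finitely generated group has two ends iff (Stallings) it has a finite normal
subgroup `F` with `Γ/F` isomorphic to `ℤ` or to the infinite dihedral group. -/
def HasTwoEnds (Γ : Type*) [Group Γ] : Prop :=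
  ∃ F : Subgroup Γ, ∃ _ : F.Normal, Finite F ∧
    (Nonempty ((Γ ⧸ F) ≃* Multiplicative ℤ) ∨ Nonempty ((Γ ⧸ F) ≃* DihedralGroup 0))

open DihedralGroup MulAction Pointwise


lemma finite_quotient_of_fun {G : Type*} [Group G] (H : Subgroup G) {ι : Type*} [Finite ι]
    (f : ι → G) (hf : ∀ g : G, ∃ i, (f i)⁻¹ * g ∈ H) : Finite (G ⧸ H) := by
  apply Finite.of_surjective (fun i => (QuotientGroup.mk (f i) : G ⧸ H))
  intro q
  obtain ⟨g, rfl⟩ := QuotientGroup.mk_surjective q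
  obtain ⟨i, hi⟩ := hf g
  exact ⟨i, (QuotientGroup.eq (s := H)).mpr hi⟩

lemma int_approx (n : ℤ) (hn : n ≠ 0) (a : ℤ) : ∃ i : Fin n.natAbs, n ∣ a - (i : ℤ) := by
  have hm : (0:ℤ) < (n.natAbs : ℤ) := by exact_mod_cast Nat.pos_of_ne_zero (Int.natAbs_ne_zero.mpr hn)
  have h1 : 0 ≤ a % (n.natAbs : ℤ) := Int.emod_nonneg a (by omega)
  have h2 : a % (n.natAbs : ℤ) < (n.natAbs : ℤ) := Int.emod_lt_of_pos a hm
  refine ⟨⟨(a % (n.natAbs : ℤ)).toNat, by omega⟩, ?_⟩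
  have h3 : ((a % (n.natAbs : ℤ)).toNat : ℤ) = a % (n.natAbs : ℤ) := Int.toNat_of_nonneg h1
  rw [Fin.val_mk, h3]
  have hdvd : n ∣ (n.natAbs : ℤ) := Int.dvd_natAbs.mpr dvd_rfl
  calc n ∣ (n.natAbs : ℤ) * (a / (n.natAbs : ℤ)) := hdvd.mul_right _
    _ = a - a % (n.natAbs:ℤ) := by rw [Int.emod_def]; ring

def zint (a : ZMod 0) : ℤ := a

lemma r_inv_int (x : ℤ) : (r (x:ℤ) : DihedralGroup 0)⁻¹ = r (-x : ℤ) := rfl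
lemma sr_inv_int (x : ℤ) : (sr (x:ℤ) : DihedralGroup 0)⁻¹ = sr (x : ℤ) := rfl
lemma r_pow_int (n : ℤ) (k : ℕ) : (r (n : ℤ) : DihedralGroup 0)^k = r (n*k : ℤ) := by
  induction k with
  | zero => simp only [pow_zero, Nat.cast_zero, mul_zero]; rfl
  | succ k ih =>
    rw [pow_succ, ih]; erw [r_mul_r]
    congr 1
    show (n*k + n : ℤ) = (n*(k+1) : ℤ)
    ring
lemma r_zpow_int (n : ℤ) (k : ℤ) : (r (n : ℤ) : DihedralGroup 0)^k = r (n*k : ℤ) := by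
  cases k with
  | ofNat k => rw [Int.ofNat_eq_coe, zpow_natCast, r_pow_int]
  | negSucc k =>
    rw [zpow_negSucc, r_pow_int, r_inv_int]
    congr 1
    show (-(n * ((k+1:ℕ) : ℤ)) : ℤ) = (n * Int.negSucc k : ℤ)
    simp [Int.negSucc_eq]; ring

lemma dihedral_finiteIndex (H : Subgroup (DihedralGroup 0)) (hH : Infinite H) :
    H.FiniteIndex := by
  obtain ⟨n, hn0, hnH⟩ : ∃ n : ℤ, n ≠ 0 ∧ r (n:ℤ) ∈ H := by
    by_cases hR : {i : ℤ | r (i:ℤ) ∈ H}.Infinite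
    · obtain ⟨i, hi⟩ := (hR.diff (Set.finite_singleton 0)).nonempty
      exact ⟨i, hi.2, hi.1⟩
    · have hS : {i : ℤ | sr (i:ℤ) ∈ H}.Infinite := by
        intro hSfin
        rw [Set.not_infinite] at hR
        have hfin : (H : Set (DihedralGroup 0)).Finite := by
          apply Set.Finite.subset ((hR.image (fun i : ℤ => r (i:ℤ))).union
            (hSfin.image (fun i : ℤ => sr (i:ℤ))))
          rintro (x | x) hx
          · exact Or.inl ⟨x, hx, rfl⟩
          · exact Or.inr ⟨x, hx, rfl⟩
        exact (Set.infinite_coe_iff.mp hH) hfin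
      obtain ⟨i, hi⟩ := hS.nonempty
      obtain ⟨j, hj⟩ := (hS.diff (Set.finite_singleton i)).nonempty
      refine ⟨i - j, sub_ne_zero.mpr (fun h => hj.2 (by simpa using h.symm)), ?_⟩
      have hi' : sr (i:ℤ) ∈ H := hi
      have hj' : sr (j:ℤ) ∈ H := hj.1
      have := mul_mem hj' hi'
      erw [sr_mul_sr] at this; exact this
  have hfinq : Finite (DihedralGroup 0 ⧸ Subgroup.zpowers (r (n:ℤ))) := by
    apply finite_quotient_of_fun _
      (Sum.elim (fun i : Fin n.natAbs => (r (i:ℤ) : DihedralGroup 0))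
                (fun i : Fin n.natAbs => (sr (i:ℤ) : DihedralGroup 0)))
    rintro (a | a)
    · obtain ⟨i, k, hk⟩ := int_approx n hn0 (zint a)
      refine ⟨Sum.inl i, ?_⟩
      rw [Sum.elim_inl, r_inv_int]; erw [r_mul_r]
      refine Subgroup.mem_zpowers_iff.mpr ⟨k, ?_⟩
      rw [r_zpow_int]
      congr 1
      show (n*k : ℤ) = (-(i:ℤ) + zint a : ℤ)
      linarith [hk]
    · obtain ⟨i, k, hk⟩ := int_approx n hn0 (zint a)
      refine ⟨Sum.inr i, ?_⟩
      rw [Sum.elim_inr, sr_inv_int]; erw [sr_mul_sr]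
      refine Subgroup.mem_zpowers_iff.mpr ⟨k, ?_⟩
      rw [r_zpow_int]
      congr 1
      show (n*k : ℤ) = (zint a - (i:ℤ) : ℤ)
      linarith [hk]
  have : (Subgroup.zpowers (r (n:ℤ) : DihedralGroup 0)).FiniteIndex :=
    Subgroup.finiteIndex_of_finite_quotient
  exact Subgroup.finiteIndex_of_le (Subgroup.zpowers_le.mpr hnH)

lemma multZ_finiteIndex (H : Subgroup (Multiplicative ℤ)) (hH : Infinite H) : H.FiniteIndex := by
  obtain ⟨x, hxH, hx1⟩ : ∃ x : Multiplicative ℤ, x ∈ H ∧ x ≠ 1 := by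
    by_contra h
    push_neg at h
    have hb : H = ⊥ := (Subgroup.eq_bot_iff_forall H).mpr h
    rw [hb] at hH
    exact not_finite (↥(⊥ : Subgroup (Multiplicative ℤ)))
  have hn0 : Multiplicative.toAdd x ≠ 0 := fun h => hx1 (by
    have := congrArg Multiplicative.ofAdd h
    simpa using this)
  have hfinq : Finite (Multiplicative ℤ ⧸ Subgroup.zpowers x) := by
    apply finite_quotient_of_fun _
      (fun i : Fin (Multiplicative.toAdd x).natAbs => Multiplicative.ofAdd (i:ℤ))
    intro g
    obtain ⟨i, k, hk⟩ := int_approx _ hn0 (Multiplicative.toAdd g)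
    refine ⟨i, Subgroup.mem_zpowers_iff.mpr ⟨k, ?_⟩⟩
    apply Multiplicative.toAdd.injective
    rw [toAdd_zpow]
    simp only [smul_eq_mul, toAdd_mul, toAdd_inv,
      toAdd_ofAdd]
    linarith [hk]
  have : (Subgroup.zpowers x).FiniteIndex := Subgroup.finiteIndex_of_finite_quotient
  exact Subgroup.finiteIndex_of_le (Subgroup.zpowers_le.mpr hxH)

/-- transport: infinite subgroups of a group iso to ℤ or D∞ have finite index -/
lemma finiteIndex_of_iso {G M : Type*} [Group G] [Group M] (e : G ≃* M)
    (hM : ∀ H : Subgroup M, Infinite H → H.FiniteIndex)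
    (D : Subgroup G) (hD : Infinite D) : D.FiniteIndex := by
  have hinf : Infinite (D.map e.toMonoidHom) :=
    Infinite.of_injective _ (Subgroup.equivMapOfInjective D e.toMonoidHom e.injective).injective
  have h1 : (D.map e.toMonoidHom).FiniteIndex := hM _ hinf
  have hker : (e.toMonoidHom : G →* M).ker ≤ D := by
    intro x hx
    have hx1 : e x = 1 := hx
    have : x = 1 := by
      apply e.injective; rw [hx1, map_one]
    rw [this]; exact one_mem _
  refine ⟨?_⟩
  rw [← Subgroup.index_map_eq (H := D) e.surjective hker]
  exact h1.index_ne_zero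

lemma twoEnds_finiteIndex {Γ : Type*} [Group Γ] (h2 : HasTwoEnds Γ)
    (C : Subgroup Γ) (hC : Infinite C) : C.FiniteIndex := by
  obtain ⟨F, hFn, hFfin, hiso⟩ := h2
  set π := QuotientGroup.mk' F with hπ
  have hπs : Function.Surjective π := QuotientGroup.mk'_surjective F
  -- C.map π is infinite
  have hmapinf : Infinite (C.map π) := by
    by_contra hfin
    rw [not_infinite_iff_finite] at hfin
    have hCF : Finite ↥(C ⊓ F) := Finite.of_injective _ (Subgroup.inclusion_injective (inf_le_right : C ⊓ F ≤ F))
    have hsurj : Function.Surjective (fun p : ↥(C.map π) × ↥(C ⊓ F) =>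
        (⟨(Subgroup.mem_map.mp p.1.2).choose * (p.2 : Γ),
          mul_mem (Subgroup.mem_map.mp p.1.2).choose_spec.1 (Subgroup.mem_inf.mp p.2.2).1⟩ : ↥C)) := by
      rintro ⟨c, hc⟩
      set d : ↥(C.map π) := ⟨π c, Subgroup.mem_map.mpr ⟨c, hc, rfl⟩⟩ with hd
      obtain ⟨hc₀C, hc₀π⟩ := (Subgroup.mem_map.mp d.2).choose_spec
      set c₀ := (Subgroup.mem_map.mp d.2).choose
      have hu : c₀⁻¹ * c ∈ C ⊓ F := by
        refine Subgroup.mem_inf.mpr ⟨mul_mem (inv_mem hc₀C) hc, ?_⟩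
        have h1 : π (c₀⁻¹ * c) = 1 := by
          rw [map_mul, map_inv, hc₀π]; exact inv_mul_cancel _
        exact (QuotientGroup.eq_one_iff _).mp h1
      refine ⟨⟨d, ⟨c₀⁻¹ * c, hu⟩⟩, ?_⟩
      ext
      simp [c₀]
    have : Finite ↥C := Finite.of_surjective _ hsurj
    exact not_finite ↥C
  -- C.map π has finite index
  have hmapfi : (C.map π).FiniteIndex := by
    rcases hiso with ⟨⟨e⟩⟩ | ⟨⟨e⟩⟩
    · exact finiteIndex_of_iso e multZ_finiteIndex _ hmapinf
    · exact finiteIndex_of_iso e dihedral_finiteIndex _ hmapinf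
  -- K = comap π (C.map π)
  set K := Subgroup.comap π (C.map π) with hK
  have hKfi : K.FiniteIndex := ⟨by
    rw [hK, Subgroup.index_comap_of_surjective _ hπs]; exact hmapfi.index_ne_zero⟩
  have hCK : C ≤ K := Subgroup.le_comap_map π C
  have hrel : Finite (K ⧸ C.subgroupOf K) := by
    have hFK : F ≤ K := by
      intro f hf
      simp only [hK, Subgroup.mem_comap]
      have : π f = 1 := (QuotientGroup.eq_one_iff f).mpr hf
      rw [this]; exact one_mem _
    apply finite_quotient_of_fun _ (fun u : ↥F => (⟨(u : Γ), hFK u.2⟩ : ↥K))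
    rintro ⟨k, hk⟩
    have : π k ∈ C.map π := hk
    obtain ⟨c, hcC, hcπ⟩ := Subgroup.mem_map.mp this
    have huF : k * c⁻¹ ∈ F := by
      have : π (k * c⁻¹) = 1 := by rw [map_mul, map_inv, hcπ]; simp
      exact (QuotientGroup.eq_one_iff _).mp this
    refine ⟨⟨k * c⁻¹, huF⟩, ?_⟩
    rw [Subgroup.mem_subgroupOf]
    show ((⟨k * c⁻¹, hFK huF⟩ : ↥K)⁻¹ * ⟨k, hk⟩ : ↥K).1 ∈ C
    simp only [Subgroup.coe_mul, Subgroup.coe_inv]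
    have : (k * c⁻¹)⁻¹ * k = c := by group
    rw [this]
    exact hcC
  have hrelne : C.relIndex K ≠ 0 := by
    have := Subgroup.index_ne_zero_of_finite (H := C.subgroupOf K)
    exact this
  refine ⟨?_⟩
  rw [← Subgroup.relIndex_mul_index hCK]
  exact mul_ne_zero hrelne hKfi.index_ne_zero


lemma dense_orbit_of_normal_finiteIndex {Γ X : Type*} [Group Γ] [TopologicalSpace X]
    [ConnectedSpace X] [MulAction Γ X] [ContinuousConstSMul Γ X]
    (N : Subgroup Γ) (hNn : N.Normal) (hNfi : N.FiniteIndex)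
    (hdense : ∀ x : X, Dense (MulAction.orbit Γ x)) (x : X) :
    Dense (MulAction.orbit N x) := by
  classical
  set A : X → Set X := fun z => closure (orbit N z) with hAdef
  have hmemA : ∀ z : X, z ∈ A z := fun z => subset_closure (mem_orbit_self z)
  have hclosed : ∀ z : X, IsClosed (A z) := fun z => isClosed_closure
  have horb : ∀ (g : Γ) (z : X), g • (orbit N z : Set X) = orbit N (g • z) := by
    intro g z
    ext w
    constructor
    · rintro ⟨v, ⟨n, rfl⟩, rfl⟩
      refine ⟨⟨g * n * g⁻¹, hNn.conj_mem n n.2 g⟩, ?_⟩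
      show (g * (n:Γ) * g⁻¹) • (g • z) = g • ((n:Γ) • z)
      rw [← mul_smul, ← mul_smul]
      congr 1
      group
    · rintro ⟨m, rfl⟩
      refine ⟨(g⁻¹ * m * g) • z, ⟨⟨g⁻¹ * m * g, ?_⟩, rfl⟩, ?_⟩
      · have := hNn.conj_mem m m.2 g⁻¹
        simpa using this
      · show g • ((g⁻¹ * (m:Γ) * g) • z) = (m:Γ) • (g • z)
        rw [← mul_smul, ← mul_smul]
        congr 1
        group
  have hA : ∀ (g : Γ) (z : X), g • A z = A (g • z) := by
    intro g z
    show g • closure (orbit N z) = closure (orbit N (g • z))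
    rw [← closure_smul, horb]
  have hAinv : ∀ (n : Γ) (_ : n ∈ N) (z : X), A (n • z) = A z := by
    intro n hn z
    show closure (orbit N (n • z)) = closure (orbit N z)
    have : n • z = (⟨n, hn⟩ : N) • z := rfl
    rw [this, orbit_smul]
  have hsubset : ∀ {w z : X}, w ∈ A z → A w ⊆ A z := by
    intro w z hw
    apply closure_minimal ?_ (hclosed z)
    rintro _ ⟨n, rfl⟩
    show (n : Γ) • w ∈ A z
    have h1 : (n : Γ) • w ∈ (n : Γ) • A z := Set.smul_mem_smul_set hw
    rwa [hA, hAinv n n.2 z] at h1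
  have hTfin : ∀ z : X, (orbit Γ (A z)).Finite := by
    intro z
    have hstab : N ≤ stabilizer Γ (A z) := by
      intro n hn
      rw [MulAction.mem_stabilizer_iff, hA, hAinv n hn]
    have : (stabilizer Γ (A z)).FiniteIndex := Subgroup.finiteIndex_of_le hstab
    rw [← Set.finite_coe_iff]
    exact Finite.of_equiv _ (orbitEquivQuotientStabilizer Γ (A z)).symm
  have hTclosed : ∀ (z : X) (B : Set X), B ∈ orbit Γ (A z) → IsClosed B := by
    rintro z B ⟨g, rfl⟩
    show IsClosed (g • A z)
    rw [hA]
    exact hclosed _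
  have hcover : ∀ z w : X, ∃ g : Γ, w ∈ g • A z := by
    intro z w
    have hsub : orbit Γ z ⊆ ⋃ B ∈ orbit Γ (A z), B := by
      rintro _ ⟨g, rfl⟩
      exact Set.mem_biUnion (mem_orbit (A z) g) (Set.smul_mem_smul_set (hmemA z))
    have hcl : IsClosed (⋃ B ∈ orbit Γ (A z), B) :=
      (hTfin z).isClosed_biUnion (hTclosed z)
    have huniv : (⋃ B ∈ orbit Γ (A z), B) = Set.univ := by
      apply Set.eq_univ_of_univ_subset
      rw [← (hdense z).closure_eq]
      exact hcl.closure_subset_iff.mpr hsub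
    have hw : w ∈ ⋃ B ∈ orbit Γ (A z), B := huniv ▸ Set.mem_univ w
    obtain ⟨B, hB, hwB⟩ := Set.mem_iUnion₂.mp hw
    obtain ⟨g, rfl⟩ := hB
    exact ⟨g, hwB⟩
  -- main argument
  rw [dense_iff_closure_eq]
  show A x = Set.univ
  by_contra hne
  set T : Finset (Set X) := (hTfin x).toFinset with hTdef
  have hmemT : ∀ B : Set X, B ∈ T ↔ B ∈ orbit Γ (A x) := fun B => Set.Finite.mem_toFinset _
  set P : ℕ → Prop := fun m => ∀ w : X, ∃ S : Finset (Set X),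
    S ⊆ T ∧ S.card = m ∧ ∀ B ∈ S, w ∈ B with hPdef
  have hP0 : P 0 := fun w => ⟨∅, by simp⟩
  have hstep : ∀ m, P m → P (m + 1) := by
    intro m hPm
    have hstepA : ∃ w₀ : X, ∃ S : Finset (Set X),
        S ⊆ T ∧ S.card = m + 1 ∧ ∀ B ∈ S, w₀ ∈ B := by
      rcases Nat.eq_zero_or_pos m with rfl | hmpos
      · refine ⟨x, {A x}, ?_, by simp, by simpa using hmemA x⟩
        intro B hB
        rw [Finset.mem_singleton] at hB
        subst hB
        exact (hmemT _).mpr (mem_orbit_self _)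
      · by_contra hno
        push_neg at hno
        obtain ⟨S₀, hS₀T, hS₀card, hxS₀⟩ := hPm x
        set U : Set X := ⋂ B ∈ S₀, B with hUdef
        have hUne : U.Nonempty := ⟨x, Set.mem_iInter₂.mpr hxS₀⟩
        have hUclosed : IsClosed U :=
          isClosed_biInter (fun B hB => hTclosed x B ((hmemT B).mp (hS₀T hB)))
        have hcompl : Uᶜ = ⋃ S ∈ (T.powersetCard m).erase S₀, ⋂ B ∈ S, B := by
          ext w
          constructor
          · intro hw
            obtain ⟨S, hST', hcard', hwS⟩ := hPm w
            have hSmem : S ∈ T.powersetCard m := Finset.mem_powersetCard.mpr ⟨hST', hcard'⟩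
            have hSne : S ≠ S₀ := by
              rintro rfl
              exact hw (Set.mem_iInter₂.mpr hwS)
            exact Set.mem_iUnion₂.mpr ⟨S, Finset.mem_erase.mpr ⟨hSne, hSmem⟩,
              Set.mem_iInter₂.mpr hwS⟩
          · intro hw hwU
            obtain ⟨S, hS, hwS⟩ := Set.mem_iUnion₂.mp hw
            obtain ⟨hSne, hSmem⟩ := Finset.mem_erase.mp hS
            obtain ⟨hST', hcard'⟩ := Finset.mem_powersetCard.mp hSmem
            have hnotsub : ¬ S ⊆ S₀ := fun hsub =>
              hSne (Finset.eq_of_subset_of_card_le hsub (by omega))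
            obtain ⟨b, hbS, hbns⟩ := Finset.not_subset.mp hnotsub
            have hssub : S₀ ⊂ S ∪ S₀ :=
              (Finset.ssubset_iff_of_subset Finset.subset_union_right).mpr
                ⟨b, Finset.mem_union_left _ hbS, hbns⟩
            have hcard2 : m + 1 ≤ (S ∪ S₀).card := by
              have := Finset.card_lt_card hssub
              omega
            obtain ⟨S', hS'sub, hS'card⟩ := Finset.exists_subset_card_eq hcard2
            obtain ⟨B, hBS', hwB⟩ := hno w S'
              (hS'sub.trans (Finset.union_subset hST' hS₀T)) hS'card
            rcases Finset.mem_union.mp (hS'sub hBS') with hB | hB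
            · exact hwB (Set.mem_iInter₂.mp hwS B hB)
            · exact hwB (Set.mem_iInter₂.mp hwU B hB)
        have hUopen : IsOpen U := by
          have : IsClosed Uᶜ := by
            rw [hcompl]
            apply Set.Finite.isClosed_biUnion (Finset.finite_toSet _)
            intro S hS
            obtain ⟨hSne, hSmem⟩ := Finset.mem_erase.mp hS
            obtain ⟨hST', _⟩ := Finset.mem_powersetCard.mp hSmem
            exact isClosed_biInter (fun B hB => hTclosed x B ((hmemT B).mp (hST' hB)))
          rw [← compl_compl U]
          exact this.isOpen_compl
        have hUuniv : U = Set.univ := IsClopen.eq_univ ⟨hUclosed, hUopen⟩ hUne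
        obtain ⟨B, hBS₀⟩ := Finset.card_pos.mp (hS₀card ▸ hmpos)
        have hBuniv : B = Set.univ := by
          apply Set.eq_univ_of_univ_subset
          rw [← hUuniv]
          exact Set.biInter_subset_of_mem hBS₀
        obtain ⟨g, hgB⟩ := (hmemT B).mp (hS₀T hBS₀)
        apply hne
        have : A x = g⁻¹ • (Set.univ : Set X) := by
          rw [← hBuniv, ← hgB, ← mul_smul, inv_mul_cancel, one_smul]
        rw [this, Set.smul_set_univ]
    obtain ⟨w₀, S, hST, hScard, hw₀⟩ := hstepA
    intro w
    obtain ⟨g, hg⟩ := hcover w₀ w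
    refine ⟨S.image (fun B => g • B), ?_, ?_, ?_⟩
    · intro B' hB'
      obtain ⟨B, hB, rfl⟩ := Finset.mem_image.mp hB'
      obtain ⟨h, rfl⟩ := (hmemT B).mp (hST hB)
      refine (hmemT _).mpr ⟨g * h, ?_⟩
      show (g * h) • A x = g • h • A x
      rw [mul_smul]
    · rw [Finset.card_image_of_injective _ (MulAction.injective g), hScard]
    · intro B' hB'
      obtain ⟨B, hB, rfl⟩ := Finset.mem_image.mp hB'
      obtain ⟨h, rfl⟩ := (hmemT B).mp (hST hB)
      have hsub2 : A w₀ ⊆ (h : Γ) • A x := by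
        rw [hA]
        exact hsubset (by rw [← hA]; exact hw₀ _ hB)
      exact Set.smul_set_mono hsub2 hg
  have hPall : ∀ m, P m := by
    intro m
    induction m with
    | zero => exact hP0
    | succ k ih => exact hstep k ih
  obtain ⟨S, hST, hScard, _⟩ := hPall (T.card + 1) x
  have := Finset.card_le_card hST
  omega


/-- For a finitely generated group Γ with two ends acting continuously on a connected
T1 space X, and an infinite subgroup C ⊆ Γ, the Γ-orbits are dense iff the C-orbits are. -/
theorem stmt2 {Γ X : Type*} [Group Γ] [Group.FG Γ] (h2 : HasTwoEnds Γ)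
    (C : Subgroup Γ) (hC : Infinite C)
    [TopologicalSpace X] [ConnectedSpace X] [T1Space X]
    [MulAction Γ X] [ContinuousConstSMul Γ X] :
    (∀ x : X, Dense (MulAction.orbit Γ x)) ↔ (∀ x : X, Dense (MulAction.orbit C x)) := by
  constructor
  · intro hG x
    have hCfi : C.FiniteIndex := twoEnds_finiteIndex h2 C hC
    haveI := hCfi
    have hNfi : (C.normalCore).FiniteIndex := Subgroup.finiteIndex_normalCore C
    have hd := dense_orbit_of_normal_finiteIndex C.normalCore
      (Subgroup.normalCore_normal C) hNfi hG x
    apply hd.mono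
    rintro _ ⟨n, rfl⟩
    exact ⟨⟨(n : Γ), C.normalCore_le n.2⟩, rfl⟩
  · intro hCd x
    apply (hCd x).mono
    rintro _ ⟨c, rfl⟩
    exact ⟨(c : Γ), rfl⟩
end
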